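/- Subset selection with small pairwise correlations: let A ≥ 2 be a natural number, T ∈ ℝ, and R : Fin A → Fin A → ℝ satisfy R i j = R j i, R i i = 1, and 0 ≤ R i j ≤ 1 for all i, j, together with Σ_{i,j} R i j ≤ T. Then for every natural number M with 2 ≤ M ≤ A there exists a subset S ⊆ Fin A with |S| = M such that R i j ≤ (M(M−1)/2) · T / A² for all distinct i, j ∈ S. -/

import Mathlib

open Finset

/-- Number of `M`-subsets of a fintype containing two fixed distinct elements. -/
lemma count_contains_pair {α : Type*} [DecidableEq α] [Fintype α] (M : ℕ) (hM : 2 ≤ M)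
    (i j : α) (hij : i ≠ j) :
    ((Finset.powersetCard M (Finset.univ : Finset α)).filter
      (fun S => i ∈ S ∧ j ∈ S)).card = (Fintype.card α - 2).choose (M - 2) := by
  have hcard : (((Finset.univ : Finset α).erase i).erase j).card = Fintype.card α - 2 := by
    rw [Finset.card_erase_of_mem (by simp [hij.symm]), Finset.card_erase_of_mem (by simp),
      Finset.card_univ]
    omega
  rw [← hcard, ← Finset.card_powersetCard]
  refine Finset.card_bij' (fun S _ => (S.erase i).erase j)
    (fun S _ => insert i (insert j S)) ?_ ?_ ?_ ?_
  · intro S hS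
    simp only [Finset.mem_filter, Finset.mem_powersetCard] at hS
    obtain ⟨⟨hsub, hScard⟩, hiS, hjS⟩ := hS
    rw [Finset.mem_powersetCard]
    constructor
    · intro x hx
      simp only [Finset.mem_erase] at hx ⊢
      exact ⟨hx.1, hx.2.1, Finset.mem_univ x⟩
    · rw [Finset.card_erase_of_mem (Finset.mem_erase.2 ⟨hij.symm, hjS⟩),
        Finset.card_erase_of_mem hiS, hScard]
      omega
  · intro S hS
    rw [Finset.mem_powersetCard] at hS
    obtain ⟨hsub, hScard⟩ := hS
    have hiS : i ∉ S := fun h => by simpa using (hsub h)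
    have hjS : j ∉ S := fun h => by
      have := hsub h; simp only [Finset.mem_erase] at this; exact this.1 rfl
    simp only [Finset.mem_filter, Finset.mem_powersetCard]
    refine ⟨⟨Finset.subset_univ _, ?_⟩, Finset.mem_insert_self _ _,
      Finset.mem_insert_of_mem (Finset.mem_insert_self _ _)⟩
    rw [Finset.card_insert_of_notMem (by simp [hij, hiS]),
      Finset.card_insert_of_notMem hjS, hScard]
    omega
  · intro S hS
    simp only [Finset.mem_filter] at hS
    obtain ⟨_, hiS, hjS⟩ := hS
    rw [Finset.insert_erase (Finset.mem_erase.2 ⟨hij.symm, hjS⟩), Finset.insert_erase hiS]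
  · intro S hS
    rw [Finset.mem_powersetCard] at hS
    obtain ⟨hsub, _⟩ := hS
    have hiS : i ∉ S := fun h => by simpa using (hsub h)
    have hjS : j ∉ S := fun h => by
      have := hsub h; simp only [Finset.mem_erase] at this; exact this.1 rfl
    rw [Finset.erase_insert (by simp [hij, hiS]), Finset.erase_insert hjS]

lemma choose_identity (A M : ℕ) (hM : 2 ≤ M) (hMA : M ≤ A) :
    A.choose M * (M * (M - 1)) = A * (A - 1) * ((A - 2).choose (M - 2)) := by
  obtain ⟨a, rfl⟩ : ∃ a, A = a + 2 := ⟨A - 2, by omega⟩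
  obtain ⟨m, rfl⟩ : ∃ m, M = m + 2 := ⟨M - 2, by omega⟩
  simp only [Nat.add_sub_cancel, show m + 2 - 1 = m + 1 from rfl,
    show a + 2 - 1 = a + 1 from rfl]
  have h1 : (a + 1) * a.choose m = (a + 1).choose (m + 1) * (m + 1) :=
    Nat.add_one_mul_choose_eq a m
  have h2 : (a + 2) * (a + 1).choose (m + 1) = (a + 2).choose (m + 2) * (m + 2) :=
    Nat.add_one_mul_choose_eq (a + 1) (m + 1)
  calc (a + 2).choose (m + 2) * ((m + 2) * (m + 1))
      = (a + 2).choose (m + 2) * (m + 2) * (m + 1) := by ring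
    _ = (a + 2) * (a + 1).choose (m + 1) * (m + 1) := by rw [← h2]
    _ = (a + 2) * ((a + 1) * a.choose m) := by rw [mul_assoc, h1]
    _ = (a + 2) * (a + 1) * a.choose m := by ring

/-- Subset selection with small pairwise correlations: from an A×A correlation
matrix with total sum at most T, one can extract M indices whose pairwise
correlations are all at most C(M,2)·T/A². -/
theorem exists_subset_small_correlations (A : ℕ) (hA : 2 ≤ A) (T : ℝ)
    (R : Fin A → Fin A → ℝ)
    (hsymm : ∀ i j, R i j = R j i) (hdiag : ∀ i, R i i = 1)
    (hbd : ∀ i j, 0 ≤ R i j ∧ R i j ≤ 1)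
    (hsum : ∑ i : Fin A, ∑ j : Fin A, R i j ≤ T)
    (M : ℕ) (hM2 : 2 ≤ M) (hMA : M ≤ A) :
    ∃ S : Finset (Fin A), S.card = M ∧
      ∀ i ∈ S, ∀ j ∈ S, i ≠ j →
        R i j ≤ (M : ℝ) * ((M : ℝ) - 1) / 2 * T / (A : ℝ) ^ 2 := by
  have hA0 : (0:ℝ) < (A:ℝ) := by positivity
  have hAR : (2:ℝ) ≤ (A:ℝ) := by exact_mod_cast hA
  have hMR : (2:ℝ) ≤ (M:ℝ) := by exact_mod_cast hM2
  have hA2pos : (0:ℝ) < (A:ℝ)^2 := by positivity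
  -- T is at least A
  have hTA : (A:ℝ) ≤ T := by
    refine le_trans ?_ hsum
    calc (A:ℝ) = ∑ _i : Fin A, (1:ℝ) := by simp
      _ = ∑ i : Fin A, R i i := by simp [hdiag]
      _ ≤ ∑ i : Fin A, ∑ j : Fin A, R i j :=
          Finset.sum_le_sum fun i _ =>
            Finset.single_le_sum (fun j _ => (hbd i j).1) (Finset.mem_univ i)
  by_cases hcase : (A:ℝ)^2 ≤ T
  · -- trivial case: the bound is at least 1
    obtain ⟨S, _, hScard⟩ := Finset.exists_subset_card_eq (s := (Finset.univ : Finset (Fin A))) (n := M)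
      (by simpa using hMA)
    refine ⟨S, hScard, fun i _ j _ _ => ?_⟩
    rw [le_div_iff₀ hA2pos]
    have h1 := (hbd i j).2
    have h0 := (hbd i j).1
    have hT0 : (0:ℝ) ≤ T := le_trans (le_of_lt hA0) hTA
    have h2 : (1:ℝ) ≤ (M:ℝ) * ((M:ℝ) - 1) / 2 := by nlinarith [hMR]
    have h3 : T ≤ (M:ℝ) * ((M:ℝ) - 1) / 2 * T := by nlinarith [mul_le_mul_of_nonneg_right h2 hT0]
    have h4 : R i j * (A:ℝ)^2 ≤ (A:ℝ)^2 := by nlinarith [mul_le_mul_of_nonneg_right h1 (le_of_lt hA2pos)]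
    linarith
  · push_neg at hcase
    -- averaging argument
    set g : Fin A → Fin A → ℝ := fun i j => if i = j then 0 else R i j with hg
    have hg0 : ∀ i j, 0 ≤ g i j := by
      intro i j; simp only [hg]; split <;> [rfl; skip] <;> exact (hbd i j).1
    have hgsum : ∑ i : Fin A, ∑ j : Fin A, g i j ≤ T - A := by
      have : ∀ i : Fin A, ∑ j : Fin A, g i j = (∑ j : Fin A, R i j) - 1 := by
        intro i
        rw [← Finset.add_sum_erase _ (fun j => g i j) (Finset.mem_univ i),
          ← Finset.add_sum_erase _ (fun j => R i j) (Finset.mem_univ i)]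
        have : ∑ j ∈ Finset.univ.erase i, g i j = ∑ j ∈ Finset.univ.erase i, R i j :=
          Finset.sum_congr rfl fun j hj => by
            simp only [hg]; rw [if_neg (Ne.symm (Finset.mem_erase.1 hj).1)]
        rw [this, show g i i = 0 by simp [hg], hdiag i]; ring
      rw [Finset.sum_congr rfl fun i _ => this i, Finset.sum_sub_distrib]
      simp only [Finset.sum_const, Finset.card_univ, Fintype.card_fin, nsmul_eq_mul, mul_one]
      linarith [hsum]
    set 𝒮 := Finset.powersetCard M (Finset.univ : Finset (Fin A)) with h𝒮
    have h𝒮card : 𝒮.card = A.choose M := by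
      rw [h𝒮, Finset.card_powersetCard, Finset.card_univ, Fintype.card_fin]
    have h𝒮ne : 𝒮.Nonempty := by
      obtain ⟨S, hS, hScard⟩ := Finset.exists_subset_card_eq (s := (Finset.univ : Finset (Fin A))) (n := M)
        (by simpa using hMA)
      exact ⟨S, Finset.mem_powersetCard.2 ⟨hS, hScard⟩⟩
    set f : Finset (Fin A) → ℝ := fun S => ∑ i ∈ S, ∑ j ∈ S, g i j with hf
    obtain ⟨S₀, hS₀mem, hS₀min⟩ := Finset.exists_min_image 𝒮 f h𝒮ne
    -- the key double-counting identity
    have hkey : ∑ S ∈ 𝒮, f S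
        = ((A - 2).choose (M - 2) : ℝ) * ∑ i : Fin A, ∑ j : Fin A, g i j := by
      have step1 : ∀ S ∈ 𝒮, f S
          = ∑ i : Fin A, ∑ j : Fin A, if i ∈ S ∧ j ∈ S then g i j else 0 := by
        intro S _
        rw [hf]
        simp only [ite_and]
        refine Eq.symm ?_
        calc ∑ x : Fin A, ∑ y : Fin A, (if x ∈ S then if y ∈ S then g x y else 0 else 0)
            = ∑ x : Fin A, (if x ∈ S then ∑ y : Fin A, (if y ∈ S then g x y else 0) else 0) := by
              refine Finset.sum_congr rfl fun x _ => ?_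
              by_cases hx : x ∈ S <;> simp [hx]
          _ = ∑ x ∈ S, ∑ y : Fin A, (if y ∈ S then g x y else 0) := by
              rw [Finset.sum_ite_mem, Finset.univ_inter]
          _ = ∑ x ∈ S, ∑ y ∈ S, g x y := by
              refine Finset.sum_congr rfl fun x _ => ?_
              rw [Finset.sum_ite_mem, Finset.univ_inter]
      rw [Finset.sum_congr rfl step1, Finset.sum_comm]
      rw [Finset.mul_sum]
      refine Finset.sum_congr rfl fun i _ => ?_
      rw [Finset.sum_comm, Finset.mul_sum]
      refine Finset.sum_congr rfl fun j _ => ?_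
      rw [← Finset.sum_filter, Finset.sum_const, nsmul_eq_mul]
      by_cases hij : i = j
      · simp [hg, hij]
      · rw [count_contains_pair M hM2 i j hij, Fintype.card_fin]
    -- minimum is below average
    have havg : (A.choose M : ℝ) * f S₀ ≤ ((A - 2).choose (M - 2) : ℝ) * (T - A) := by
      have h1 : (𝒮.card : ℝ) * f S₀ ≤ ∑ S ∈ 𝒮, f S := by
        have := Finset.card_nsmul_le_sum 𝒮 f (f S₀) hS₀min
        rwa [nsmul_eq_mul] at this
      rw [h𝒮card] at h1
      refine h1.trans (hkey ▸ ?_)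
      exact mul_le_mul_of_nonneg_left hgsum (by positivity)
    obtain ⟨hS₀sub, hS₀card⟩ := Finset.mem_powersetCard.1 hS₀mem
    refine ⟨S₀, hS₀card, fun i hi j hj hij => ?_⟩
    -- each pair contributes 2 R i j to f S₀
    have hpair : 2 * R i j ≤ f S₀ := by
      have hsub : ({(i, j), (j, i)} : Finset (Fin A × Fin A)) ⊆ S₀ ×ˢ S₀ := by
        intro p hp
        simp only [Finset.mem_insert, Finset.mem_singleton] at hp
        rcases hp with rfl | rfl
        · exact Finset.mk_mem_product hi hj
        · exact Finset.mk_mem_product hj hi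
      have hne : ((i, j) : Fin A × Fin A) ≠ (j, i) := by
        simp [Prod.ext_iff]; intro h; exact absurd h hij
      have := Finset.sum_le_sum_of_subset_of_nonneg hsub
        (fun p _ _ => hg0 p.1 p.2)
      rw [Finset.sum_pair hne] at this
      have hfS₀ : f S₀ = ∑ p ∈ S₀ ×ˢ S₀, g p.1 p.2 := by
        rw [hf, Finset.sum_product]
      rw [hfS₀]
      refine le_trans (le_of_eq ?_) this
      simp only [hg]
      rw [if_neg hij, if_neg (Ne.symm hij), hsymm j i]
      ring
    -- put the numbers together
    have hid : (A.choose M : ℝ) * ((M:ℝ) * ((M:ℝ) - 1))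
        = (A:ℝ) * ((A:ℝ) - 1) * ((A - 2).choose (M - 2) : ℝ) := by
      have := choose_identity A M hM2 hMA
      have h1 : ((A.choose M * (M * (M - 1)) : ℕ) : ℝ)
          = ((A * (A - 1) * ((A - 2).choose (M - 2)) : ℕ) : ℝ) := by exact_mod_cast this
      push_cast at h1
      rw [Nat.cast_sub (by omega : 1 ≤ M), Nat.cast_sub (by omega : 1 ≤ A)] at h1
      push_cast at h1
      linarith [h1]
    have hcApos : (0:ℝ) < (A.choose M : ℝ) := by
      exact_mod_cast Nat.cast_pos.2 (Nat.choose_pos hMA)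
    have hc2nonneg : (0:ℝ) ≤ ((A - 2).choose (M - 2) : ℝ) := Nat.cast_nonneg _
    set cA := (A.choose M : ℝ)
    set c2 := ((A - 2).choose (M - 2) : ℝ)
    have h6 : 2 * cA * R i j ≤ c2 * (T - A) := by
      have := mul_le_mul_of_nonneg_left hpair (le_of_lt hcApos)
      nlinarith [havg]
    have h7 : (T - A) * (A:ℝ)^2 ≤ (A:ℝ) * ((A:ℝ) - 1) * T := by nlinarith
    have h8 : c2 * ((T - A) * (A:ℝ)^2) ≤ c2 * ((A:ℝ) * ((A:ℝ) - 1) * T) :=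
      mul_le_mul_of_nonneg_left h7 hc2nonneg
    have h9 : 2 * cA * (R i j * (A:ℝ)^2) ≤ cA * ((M:ℝ) * ((M:ℝ) - 1) * T) := by
      have h6' := mul_le_mul_of_nonneg_right h6 (le_of_lt hA2pos)
      nlinarith [h8, hid]
    rw [le_div_iff₀ hA2pos]
    have h10 : 2 * (R i j * (A:ℝ)^2) ≤ (M:ℝ) * ((M:ℝ) - 1) * T :=
      le_of_mul_le_mul_left (by linarith [h9]) hcApos
    linarith
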